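/- Let n > 1, m > 2, n' > 2 and y ∈ Z_m^{n'}, and let 1 ≤ i ≤ n'-1. If y_i = y_{i+1} then f_{m,n}(y) = f_{m,n}(y_{[1,i]}) + f_{m,n}(y_{[i+1,n']}) - mn + n + 1. If y_i ≠ y_{i+1} then f_{m,n}(y) ≤ f_{m,n}(y_{[1,i]}) + f_{m,n}(y_{[i+1,n']}) and f_{m,n}(y) ≥ f_{m,n}(y_{[1,i]}) + f_{m,n}(y_{[i+1,n']}) + 1 - t(y_{[1,i]})·h(y_{[i+1,n']}). -/

import Mathlib

open Finset

/-- The (0-indexed, inclusive) segment `x_i,…,x_j` is alternating, i.e. of the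
form `abab…` : adjacent symbols differ and the segment has period 2. -/
def IsAltOn {m : ℕ} (x : ℕ → Fin m) (i j : ℕ) : Prop :=
  (∀ k ∈ Finset.Ico i j, x k ≠ x (k + 1)) ∧ ∀ k ∈ Finset.Ico i (j - 1), x k = x (k + 2)

instance {m : ℕ} (x : ℕ → Fin m) (i j : ℕ) : Decidable (IsAltOn x i j) :=
  inferInstanceAs (Decidable (_ ∧ _))

/-- The set of (0-indexed, inclusive) index pairs of maximal alternating segments
of the word `x_0,…,x_{n-1}`. -/
def altSegs {m : ℕ} (n : ℕ) (x : ℕ → Fin m) : Finset (ℕ × ℕ) :=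
  (Finset.range n ×ˢ Finset.range n).filter (fun p => p.1 ≤ p.2 ∧ IsAltOn x p.1 p.2 ∧
    (p.1 = 0 ∨ ¬ IsAltOn x (p.1 - 1) p.2) ∧ (p.2 = n - 1 ∨ ¬ IsAltOn x p.1 (p.2 + 1)))

/-- `a(x)` : the number of maximal alternating segments of `x_0,…,x_{n-1}`. -/
def aCount {m : ℕ} (n : ℕ) (x : ℕ → Fin m) : ℕ := (altSegs n x).card

/-- `∑ s_i` : the sum of the lengths of the maximal alternating segments. -/
def sumLen {m : ℕ} (n : ℕ) (x : ℕ → Fin m) : ℕ := ∑ p ∈ altSegs n x, (p.2 - p.1 + 1)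

/-- `∑ s_i²` : the sum of the squares of the lengths of the maximal alternating segments. -/
def sumLenSq {m : ℕ} (n : ℕ) (x : ℕ → Fin m) : ℕ := ∑ p ∈ altSegs n x, (p.2 - p.1 + 1) ^ 2

/-- `ρ(x)` : the number of runs of the word `x_0,…,x_{n-1}`. -/
def rho {m : ℕ} (n : ℕ) (x : ℕ → Fin m) : ℕ :=
  1 + ((Finset.range (n - 1)).filter (fun i => x i ≠ x (i + 1))).card

/-- `h(x)` : the length of the first maximal alternating segment of `x_0,…,x_{n-1}`. -/
def headAlt {m : ℕ} (n : ℕ) (x : ℕ → Fin m) : ℕ :=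
  ((Finset.range n).filter (fun j => IsAltOn x 0 j)).card

/-- `t(x)` : the length of the last maximal alternating segment of `x_0,…,x_{n-1}`. -/
def tailAlt {m : ℕ} (n : ℕ) (x : ℕ → Fin m) : ℕ :=
  ((Finset.range n).filter (fun j => IsAltOn x (n - 1 - j) (n - 1))).card

/-- Extend a word of length `n` to a function `ℕ → Fin m` (junk value `0` beyond `n`). -/
def extWord {m : ℕ} (n : ℕ) (hm : 0 < m) (y : Fin n → Fin m) : ℕ → Fin m :=
  fun i => if h : i < n then y ⟨i, h⟩ else ⟨0, hm⟩

/-- The FLL ball of radius 1 around `x` : all words `y` of length `n` sharing with `x`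
a common subsequence of length `n - 1` (equivalently, `d_l(x,y) ≤ 1`). -/
def L1ball {m : ℕ} (n : ℕ) (x : Fin n → Fin m) : Set (Fin n → Fin m) :=
  {y | ∃ z : List (Fin m), z.length = n - 1 ∧ z.Sublist (List.ofFn x) ∧ z.Sublist (List.ofFn y)}

/-- `|L_1(x)|` : the size of the FLL ball of radius 1 around `x`. -/
noncomputable def L1size {m : ℕ} (n : ℕ) (x : Fin n → Fin m) : ℕ := (L1ball n x).ncard

/-- `f_n(y)` for binary words `y` of length `len` : `ρ(y)·n - (1/2)∑ s_j²`. -/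
noncomputable def fB (n len : ℕ) (y : ℕ → Fin 2) : ℝ :=
  (rho len y : ℝ) * n - (sumLenSq len y : ℝ) / 2

/-- `f_{m,n}(y)` for words `y` of length `len` over `Z_m` :
`ρ(y)(mn-n-1) - (1/2)∑ s_j² + (3/2)∑ s_j - a(y)`. -/
noncomputable def fM (m n len : ℕ) (y : ℕ → Fin m) : ℝ :=
  (rho len y : ℝ) * ((m : ℝ) * n - n - 1) - (sumLenSq len y : ℝ) / 2
    + 3 / 2 * (sumLen len y : ℝ) - (aCount len y : ℝ)

-- part 1 lemmas

theorem altOn_mono {m : ℕ} {x : ℕ → Fin m} {p q p' q' : ℕ} (h : IsAltOn x p q)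
    (hp : p ≤ p') (hq : q' ≤ q) : IsAltOn x p' q' := by
  obtain ⟨h1, h2⟩ := h
  constructor
  · intro k hk
    simp only [Finset.mem_Ico] at hk
    exact h1 k (by simp only [Finset.mem_Ico]; omega)
  · intro k hk
    simp only [Finset.mem_Ico] at hk
    exact h2 k (by simp only [Finset.mem_Ico]; omega)

theorem altOn_refl {m : ℕ} {x : ℕ → Fin m} (p : ℕ) : IsAltOn x p p := by
  constructor <;> intro k hk <;> simp only [Finset.mem_Ico] at hk <;> omega

theorem altOn_pair {m : ℕ} {x : ℕ → Fin m} {p : ℕ} (h : x p ≠ x (p+1)) : IsAltOn x p (p+1) := by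
  constructor <;> intro k hk <;> simp only [Finset.mem_Ico] at hk
  · have : k = p := by omega
    subst this; exact h
  · omega

theorem altOn_shift {m : ℕ} (x : ℕ → Fin m) (i a b : ℕ) :
    IsAltOn (fun k => x (k + i)) a b ↔ IsAltOn x (a + i) (b + i) := by
  constructor
  · rintro ⟨h1, h2⟩
    constructor
    · intro k hk
      simp only [Finset.mem_Ico] at hk
      have := h1 (k - i) (by simp only [Finset.mem_Ico]; omega)
      simpa only [show k - i + i = k by omega, show k - i + 1 + i = k + 1 by omega] using this
    · intro k hk
      simp only [Finset.mem_Ico] at hk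
      have := h2 (k - i) (by simp only [Finset.mem_Ico]; omega)
      simpa only [show k - i + i = k by omega, show k - i + 2 + i = k + 2 by omega] using this
  · rintro ⟨h1, h2⟩
    constructor
    · intro k hk
      simp only [Finset.mem_Ico] at hk
      have := h1 (k + i) (by simp only [Finset.mem_Ico]; omega)
      simpa only [show k + i + 1 = k + 1 + i by omega] using this
    · intro k hk
      simp only [Finset.mem_Ico] at hk
      have := h2 (k + i) (by simp only [Finset.mem_Ico]; omega)
      simpa only [show k + i + 2 = k + 2 + i by omega] using this

theorem mem_altSegs {m n : ℕ} {x : ℕ → Fin m} {p q : ℕ} :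
    (p, q) ∈ altSegs n x ↔ p < n ∧ q < n ∧ p ≤ q ∧ IsAltOn x p q ∧
      (p = 0 ∨ ¬ IsAltOn x (p - 1) q) ∧ (q = n - 1 ∨ ¬ IsAltOn x p (q + 1)) := by
  simp only [altSegs, Finset.mem_filter, Finset.mem_product, Finset.mem_range]
  tauto

theorem downward_eq {S : Finset ℕ} (h : ∀ j j', j' ≤ j → j ∈ S → j' ∈ S) (j : ℕ) :
    j ∈ S ↔ j < S.card := by
  constructor
  · intro hj
    have hsub : Finset.range (j + 1) ⊆ S := by
      intro j' hj'
      simp only [Finset.mem_range] at hj'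
      exact h j j' (by omega) hj
    have := Finset.card_le_card hsub
    simp only [Finset.card_range] at this
    omega
  · intro hj
    by_contra hjs
    have hsub : S ⊆ Finset.range j := by
      intro s hs
      simp only [Finset.mem_range]
      by_contra hsj
      exact hjs (h s j (by omega) hs)
    have := Finset.card_le_card hsub
    simp only [Finset.card_range] at this
    omega

theorem tailAlt_mem {m : ℕ} {N : ℕ} {w : ℕ → Fin m} {j : ℕ} (hj : j < N) :
    IsAltOn w (N - 1 - j) (N - 1) ↔ j < tailAlt N w := by
  unfold tailAlt
  rw [← downward_eq (S := (Finset.range N).filter (fun j => IsAltOn w (N - 1 - j) (N - 1)))]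
  · simp only [Finset.mem_filter, Finset.mem_range]
    tauto
  · intro a a' ha has
    simp only [Finset.mem_filter, Finset.mem_range] at has ⊢
    exact ⟨by omega, altOn_mono has.2 (by omega) le_rfl⟩

theorem headAlt_mem {m : ℕ} {N : ℕ} {w : ℕ → Fin m} {j : ℕ} (hj : j < N) :
    IsAltOn w 0 j ↔ j < headAlt N w := by
  unfold headAlt
  rw [← downward_eq (S := (Finset.range N).filter (fun j => IsAltOn w 0 j))]
  · simp only [Finset.mem_filter, Finset.mem_range]
    tauto
  · intro a a' ha has
    simp only [Finset.mem_filter, Finset.mem_range] at has ⊢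
    exact ⟨by omega, altOn_mono has.2 le_rfl (by omega)⟩

theorem tailAlt_pos {m N : ℕ} (w : ℕ → Fin m) (hN : 1 ≤ N) : 1 ≤ tailAlt N w := by
  have := (tailAlt_mem (w := w) (j := 0) hN).1 (by simpa using altOn_refl (N-1))
  omega

theorem tailAlt_le {m N : ℕ} (w : ℕ → Fin m) : tailAlt N w ≤ N := by
  simpa [tailAlt] using Finset.card_le_card (Finset.filter_subset _ (Finset.range N))

theorem headAlt_pos {m N : ℕ} (w : ℕ → Fin m) (hN : 1 ≤ N) : 1 ≤ headAlt N w := by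
  have := (headAlt_mem (w := w) (j := 0) hN).1 (altOn_refl 0)
  omega

theorem headAlt_le {m N : ℕ} (w : ℕ → Fin m) : headAlt N w ≤ N := by
  simpa [headAlt] using Finset.card_le_card (Finset.filter_subset _ (Finset.range N))

-- characterization of the unique segment ending at N-1 / starting at 0

theorem seg_end {m N : ℕ} {w : ℕ → Fin m} {p : ℕ} (hN : 1 ≤ N)
    (hp : p ≤ N - 1) (halt : IsAltOn w p (N - 1))
    (hmax : p = 0 ∨ ¬ IsAltOn w (p - 1) (N - 1)) : p = N - tailAlt N w := by
  have hT := tailAlt_le (N := N) w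
  have hchar : ∀ p', p' ≤ N - 1 → (IsAltOn w p' (N - 1) ↔ N - tailAlt N w ≤ p') := by
    intro p' hp'
    have := tailAlt_mem (N := N) (w := w) (j := N - 1 - p') (by omega)
    rw [show N - 1 - (N - 1 - p') = p' by omega] at this
    rw [this]; omega
  have h1 : N - tailAlt N w ≤ p := (hchar p hp).1 halt
  rcases Nat.lt_or_ge (N - tailAlt N w) p with h2 | h2
  · exfalso
    have hp0 : p ≠ 0 := by omega
    have : IsAltOn w (p - 1) (N - 1) := (hchar (p - 1) (by omega)).2 (by omega)
    tauto
  · omega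

theorem seg_end_mem {m N : ℕ} {w : ℕ → Fin m} (hN : 1 ≤ N) :
    (N - tailAlt N w, N - 1) ∈ altSegs N w := by
  have hT := tailAlt_le (N := N) w
  have hT1 := tailAlt_pos w hN
  rw [mem_altSegs]
  refine ⟨by omega, by omega, by omega, ?_, ?_, Or.inl rfl⟩
  · have := (tailAlt_mem (N := N) (w := w) (j := tailAlt N w - 1) (by omega)).2 (by omega)
    rwa [show N - 1 - (tailAlt N w - 1) = N - tailAlt N w by omega] at this
  · rcases Nat.eq_or_lt_of_le hT with h | h
    · exact Or.inl (by omega)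
    · refine Or.inr ?_
      have := (tailAlt_mem (N := N) (w := w) (j := tailAlt N w) (by omega))
      rw [show N - 1 - tailAlt N w = N - tailAlt N w - 1 by omega] at this
      intro hc
      exact absurd ((this).1 hc) (by omega)

theorem seg_start {m N : ℕ} {w : ℕ → Fin m} {q : ℕ} (hN : 1 ≤ N)
    (hq : q < N) (halt : IsAltOn w 0 q)
    (hmax : q = N - 1 ∨ ¬ IsAltOn w 0 (q + 1)) : q = headAlt N w - 1 := by
  have hH := headAlt_le (N := N) w
  have h1 : q < headAlt N w := (headAlt_mem hq).1 halt
  rcases Nat.lt_or_ge (q + 1) (headAlt N w) with h2 | h2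
  · exfalso
    have : IsAltOn w 0 (q + 1) := (headAlt_mem (by omega)).2 h2
    rcases hmax with h | h
    · omega
    · exact h this
  · omega

theorem seg_start_mem {m N : ℕ} {w : ℕ → Fin m} (hN : 1 ≤ N) :
    (0, headAlt N w - 1) ∈ altSegs N w := by
  have hH := headAlt_le (N := N) w
  have hH1 := headAlt_pos w hN
  rw [mem_altSegs]
  refine ⟨by omega, by omega, by omega, ?_, Or.inl rfl, ?_⟩
  · exact (headAlt_mem (N := N) (w := w) (j := headAlt N w - 1) (by omega)).2 (by omega)
  · rcases Nat.eq_or_lt_of_le hH with h | h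
    · exact Or.inl (by omega)
    · refine Or.inr ?_
      rw [show headAlt N w - 1 + 1 = headAlt N w by omega]
      intro hc
      exact absurd ((headAlt_mem (N := N) (w := w) (j := headAlt N w) (by omega)).1 hc) (by omega)

-- context lemmas for splitting at i

section Split

variable {m : ℕ} {x : ℕ → Fin m} {n' i : ℕ}

theorem tchar (h1 : 1 ≤ i) {p : ℕ} (hp : p ≤ i - 1) :
    IsAltOn x p (i - 1) ↔ i - tailAlt i x ≤ p := by
  have hT := tailAlt_le (N := i) x
  have := tailAlt_mem (N := i) (w := x) (j := i - 1 - p) (by omega)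
  rw [show i - 1 - (i - 1 - p) = p by omega] at this
  rw [this]; omega

theorem altT (h1 : 1 ≤ i) : IsAltOn x (i - tailAlt i x) (i - 1) := by
  have hT1 := tailAlt_pos x h1
  have hT := tailAlt_le (N := i) x
  exact (tchar h1 (by omega)).2 (by omega)

theorem tmax (h1 : 1 ≤ i) :
    i - tailAlt i x = 0 ∨ ¬ IsAltOn x (i - tailAlt i x - 1) (i - 1) := by
  have hT1 := tailAlt_pos x h1
  have hT := tailAlt_le (N := i) x
  rcases Nat.eq_or_lt_of_le hT with h | h
  · exact Or.inl (by omega)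
  · exact Or.inr (fun hc => by have := (tchar h1 (by omega)).1 hc; omega)

theorem hchar (h2 : i + 1 ≤ n') {q : ℕ} (hq1 : i ≤ q) (hq2 : q < n') :
    IsAltOn x i q ↔ q < i + headAlt (n' - i) (fun k => x (k + i)) := by
  have := headAlt_mem (N := n' - i) (w := fun k => x (k + i)) (j := q - i) (by omega)
  rw [altOn_shift, show 0 + i = i by omega, show q - i + i = q by omega] at this
  rw [this]; omega

theorem altH (h2 : i + 1 ≤ n') :
    IsAltOn x i (i + headAlt (n' - i) (fun k => x (k + i)) - 1) := by
  have hH1 := headAlt_pos (fun k => x (k + i)) (N := n' - i) (by omega)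
  have hH := headAlt_le (N := n' - i) (fun k => x (k + i))
  exact (hchar h2 (by omega) (by omega)).2 (by omega)

theorem hmax (h2 : i + 1 ≤ n') :
    i + headAlt (n' - i) (fun k => x (k + i)) - 1 = n' - 1 ∨
      ¬ IsAltOn x i (i + headAlt (n' - i) (fun k => x (k + i))) := by
  have hH1 := headAlt_pos (fun k => x (k + i)) (N := n' - i) (by omega)
  have hH := headAlt_le (N := n' - i) (fun k => x (k + i))
  rcases Nat.eq_or_lt_of_le hH with h | h
  · exact Or.inl (by omega)
  · exact Or.inr (fun hc => by
      have := (hchar h2 (by omega) (by omega)).1 hc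
      omega)

end Split

section Split2

variable {m : ℕ} {x : ℕ → Fin m} {n' i : ℕ}

-- junction pair is alternating
theorem alt_junction (h1 : 1 ≤ i) (hne : x (i - 1) ≠ x i) : IsAltOn x (i - 1) i := by
  have := altOn_pair (p := i - 1) (by rwa [show i - 1 + 1 = i by omega])
  rwa [show i - 1 + 1 = i by omega] at this

-- the full stretch, when no period break at the junction
theorem alt_cross (h1 : 1 ≤ i) (h2 : i + 1 ≤ n') (hne : x (i - 1) ≠ x i)
    (hb1 : tailAlt i x ≤ 1 ∨ x (i - 2) = x i)
    (hb2 : headAlt (n' - i) (fun k => x (k + i)) ≤ 1 ∨ x (i - 1) = x (i + 1)) :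
    IsAltOn x (i - tailAlt i x) (i + headAlt (n' - i) (fun k => x (k + i)) - 1) := by
  set T := tailAlt i x with hTdef
  set H := headAlt (n' - i) (fun k => x (k + i)) with hHdef
  have hT1 := tailAlt_pos x h1
  have hT := tailAlt_le (N := i) x
  have hH1 := headAlt_pos (fun k => x (k + i)) (N := n' - i) (by omega)
  have hH := headAlt_le (N := n' - i) (fun k => x (k + i))
  have hL := altT (x := x) h1
  have hR := altH (x := x) (n' := n') h2
  constructor
  · intro k hk
    simp only [Finset.mem_Ico] at hk
    rcases Nat.lt_or_ge k (i - 1) with h | h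
    · exact hL.1 k (by simp only [Finset.mem_Ico]; omega)
    · rcases Nat.eq_or_lt_of_le h with h' | h'
      · rw [← h', show i - 1 + 1 = i by omega]
        exact hne
      · exact hR.1 k (by simp only [Finset.mem_Ico]; omega)
  · intro k hk
    simp only [Finset.mem_Ico] at hk
    rcases Nat.lt_or_ge (k + 2) i with h | h
    · exact hL.2 k (by simp only [Finset.mem_Ico]; omega)
    · rcases Nat.eq_or_lt_of_le h with h' | h'
      · -- k + 2 = i
        have hTi : 2 ≤ T := by omega
        have hb : x (i - 2) = x i := hb1.resolve_left (by omega)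
        rw [show k = i - 2 by omega, show i - 2 + 2 = i by omega]
        exact hb
      · rcases Nat.lt_or_ge k i with h'' | h''
        · -- k = i - 1
          have hk1 : k = i - 1 := by omega
          have hHi : 2 ≤ H := by omega
          have hb : x (i - 1) = x (i + 1) := hb2.resolve_left (by omega)
          rw [hk1, show i - 1 + 2 = i + 1 by omega]
          exact hb
        · exact hR.2 k (by simp only [Finset.mem_Ico]; omega)

end Split2

section Split3

variable {m : ℕ} {x : ℕ → Fin m} {n' i : ℕ}

theorem alt_left_cross (h1 : 1 ≤ i) (hne : x (i - 1) ≠ x i)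
    (hb1 : tailAlt i x ≤ 1 ∨ x (i - 2) = x i) :
    IsAltOn x (i - tailAlt i x) i := by
  have hT1 := tailAlt_pos x h1
  have hT := tailAlt_le (N := i) x
  have hL := altT (x := x) h1
  constructor
  · intro k hk
    simp only [Finset.mem_Ico] at hk
    rcases Nat.lt_or_ge k (i - 1) with h | h
    · exact hL.1 k (by simp only [Finset.mem_Ico]; omega)
    · have hk1 : k = i - 1 := by omega
      rw [hk1, show i - 1 + 1 = i by omega]
      exact hne
  · intro k hk
    simp only [Finset.mem_Ico] at hk
    rcases Nat.lt_or_ge (k + 2) i with h | h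
    · exact hL.2 k (by simp only [Finset.mem_Ico]; omega)
    · have hk1 : k + 2 = i := by omega
      have hb : x (i - 2) = x i := hb1.resolve_left (by omega)
      rw [show k = i - 2 by omega, show i - 2 + 2 = i by omega]
      exact hb

theorem alt_right_cross (h1 : 1 ≤ i) (h2 : i + 1 ≤ n') (hne : x (i - 1) ≠ x i)
    (hb2 : headAlt (n' - i) (fun k => x (k + i)) ≤ 1 ∨ x (i - 1) = x (i + 1)) :
    IsAltOn x (i - 1) (i + headAlt (n' - i) (fun k => x (k + i)) - 1) := by
  have hH1 := headAlt_pos (fun k => x (k + i)) (N := n' - i) (by omega)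
  have hH := headAlt_le (N := n' - i) (fun k => x (k + i))
  have hR := altH (x := x) (n' := n') h2
  constructor
  · intro k hk
    simp only [Finset.mem_Ico] at hk
    rcases Nat.lt_or_ge k i with h | h
    · have hk1 : k = i - 1 := by omega
      rw [hk1, show i - 1 + 1 = i by omega]
      exact hne
    · exact hR.1 k (by simp only [Finset.mem_Ico]; omega)
  · intro k hk
    simp only [Finset.mem_Ico] at hk
    rcases Nat.lt_or_ge k i with h | h
    · have hk1 : k = i - 1 := by omega
      have hb : x (i - 1) = x (i + 1) := hb2.resolve_left (by omega)
      rw [hk1, show i - 1 + 2 = i + 1 by omega]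
      exact hb
    · exact hR.2 k (by simp only [Finset.mem_Ico]; omega)

-- break lemmas
theorem break1 (h1 : 2 ≤ i) (hb : x (i - 2) ≠ x i) {p q : ℕ} (hp : p ≤ i - 2) (hq : i ≤ q) :
    ¬ IsAltOn x p q := by
  intro hA
  have := hA.2 (i - 2) (by simp only [Finset.mem_Ico]; omega)
  rw [show i - 2 + 2 = i by omega] at this
  exact hb this

theorem break2 (h1 : 1 ≤ i) (hb : x (i - 1) ≠ x (i + 1)) {p q : ℕ} (hp : p ≤ i - 1)
    (hq : i + 1 ≤ q) : ¬ IsAltOn x p q := by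
  intro hA
  have := hA.2 (i - 1) (by simp only [Finset.mem_Ico]; omega)
  rw [show i - 1 + 2 = i + 1 by omega] at this
  exact hb this

theorem segL (h1 : 1 ≤ i) (h2 : i + 1 ≤ n') {p q : ℕ} (hq : q + 1 < i) :
    ((p, q) ∈ altSegs n' x ↔ (p, q) ∈ altSegs i x) := by
  rw [mem_altSegs, mem_altSegs]
  constructor
  · rintro ⟨hp1, hq1, hpq, halt, hl, hr⟩
    refine ⟨by omega, by omega, hpq, halt, hl, ?_⟩
    rcases hr with h | h
    · omega
    · exact Or.inr h
  · rintro ⟨hp1, hq1, hpq, halt, hl, hr⟩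
    refine ⟨by omega, by omega, hpq, halt, hl, ?_⟩
    rcases hr with h | h
    · omega
    · exact Or.inr h

theorem segR (h1 : 1 ≤ i) (h2 : i + 1 ≤ n') {p q : ℕ} (hp : i + 1 ≤ p) (hpq : p ≤ q) :
    ((p, q) ∈ altSegs n' x ↔ (p - i, q - i) ∈ altSegs (n' - i) (fun k => x (k + i))) := by
  rw [mem_altSegs, mem_altSegs]
  have e1 : IsAltOn (fun k => x (k + i)) (p - i) (q - i) ↔ IsAltOn x p q := by
    rw [altOn_shift, show p - i + i = p by omega, show q - i + i = q by omega]
  have e2 : IsAltOn (fun k => x (k + i)) (p - i - 1) (q - i) ↔ IsAltOn x (p - 1) q := by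
    rw [altOn_shift, show p - i - 1 + i = p - 1 by omega, show q - i + i = q by omega]
  have e3 : IsAltOn (fun k => x (k + i)) (p - i) (q - i + 1) ↔ IsAltOn x p (q + 1) := by
    rw [altOn_shift, show p - i + i = p by omega, show q - i + 1 + i = q + 1 by omega]
  constructor
  · rintro ⟨hp1, hq1, hpq', halt, hl, hr⟩
    refine ⟨by omega, by omega, by omega, e1.2 halt, ?_, ?_⟩
    · rcases hl with h | h
      · omega
      · exact Or.inr (fun hc => h (e2.1 hc))
    · rcases hr with h | h
      · exact Or.inl (by omega)
      · exact Or.inr (fun hc => h (e3.1 hc))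
  · rintro ⟨hp1, hq1, hpq', halt, hl, hr⟩
    refine ⟨by omega, by omega, hpq, e1.1 halt, ?_, ?_⟩
    · rcases hl with h | h
      · omega
      · exact Or.inr (fun hc => h (e2.2 hc))
    · rcases hr with h | h
      · exact Or.inl (by omega)
      · exact Or.inr (fun hc => h (e3.2 hc))

end Split3

section Split4

variable {m : ℕ} {x : ℕ → Fin m} {n' i : ℕ}

-- subcase A: a segment of the long word ending at i - 1 starts at i - T
theorem subA (h1 : 1 ≤ i) (h2 : i + 1 ≤ n') {p : ℕ} (hmem : (p, i - 1) ∈ altSegs n' x) :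
    p = i - tailAlt i x := by
  rw [mem_altSegs] at hmem
  obtain ⟨hpn, hqn, hpq, halt, hl, hr⟩ := hmem
  exact seg_end h1 hpq halt hl

-- subcase B: a segment of the long word starting at i ends at i + H - 1
theorem subB (h1 : 1 ≤ i) (h2 : i + 1 ≤ n') {q : ℕ} (hmem : (i, q) ∈ altSegs n' x) :
    q = i + headAlt (n' - i) (fun k => x (k + i)) - 1 := by
  rw [mem_altSegs] at hmem
  obtain ⟨hpn, hqn, hpq, halt, hl, hr⟩ := hmem
  set H := headAlt (n' - i) (fun k => x (k + i)) with hHdef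
  have hH1 := headAlt_pos (fun k => x (k + i)) (N := n' - i) (by omega)
  have hH := headAlt_le (N := n' - i) (fun k => x (k + i))
  have h3 : q < i + H := (hchar h2 hpq hqn).1 halt
  rcases Nat.lt_or_ge (q + 1) (i + H) with h4 | h4
  · exfalso
    rcases hr with h | h
    · omega
    · exact h ((hchar h2 (by omega) (by omega)).2 (by omega))
  · omega

-- membership of the tail segment (cases E, U2, U4)
theorem memTL (h1 : 1 ≤ i) (h2 : i + 1 ≤ n')
    (hcond : ¬ IsAltOn x (i - tailAlt i x) i) :
    (i - tailAlt i x, i - 1) ∈ altSegs n' x := by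
  have hT1 := tailAlt_pos x h1
  have hT := tailAlt_le (N := i) x
  rw [mem_altSegs]
  refine ⟨by omega, by omega, by omega, altT h1, tmax h1, Or.inr ?_⟩
  rwa [show i - 1 + 1 = i by omega]

-- membership of the head segment (cases E, U3, U4)
theorem memHR (h1 : 1 ≤ i) (h2 : i + 1 ≤ n')
    (hcond : ¬ IsAltOn x (i - 1) (i + headAlt (n' - i) (fun k => x (k + i)) - 1)) :
    (i, i + headAlt (n' - i) (fun k => x (k + i)) - 1) ∈ altSegs n' x := by
  have hH1 := headAlt_pos (fun k => x (k + i)) (N := n' - i) (by omega)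
  have hH := headAlt_le (N := n' - i) (fun k => x (k + i))
  rw [mem_altSegs]
  refine ⟨by omega, by omega, by omega, altH h2, Or.inr hcond, ?_⟩
  rw [show i + headAlt (n' - i) (fun k => x (k + i)) - 1 + 1
      = i + headAlt (n' - i) (fun k => x (k + i)) by omega]
  exact hmax h2

-- membership of the full crossing segment (case U1)
theorem memCross (h1 : 1 ≤ i) (h2 : i + 1 ≤ n') (hne : x (i - 1) ≠ x i)
    (hb1 : tailAlt i x ≤ 1 ∨ x (i - 2) = x i)
    (hb2 : headAlt (n' - i) (fun k => x (k + i)) ≤ 1 ∨ x (i - 1) = x (i + 1)) :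
    (i - tailAlt i x, i + headAlt (n' - i) (fun k => x (k + i)) - 1) ∈ altSegs n' x := by
  have hT1 := tailAlt_pos x h1
  have hT := tailAlt_le (N := i) x
  have hH1 := headAlt_pos (fun k => x (k + i)) (N := n' - i) (by omega)
  have hH := headAlt_le (N := n' - i) (fun k => x (k + i))
  rw [mem_altSegs]
  refine ⟨by omega, by omega, by omega, alt_cross h1 h2 hne hb1 hb2, ?_, ?_⟩
  · rcases tmax (x := x) h1 with h | h
    · exact Or.inl h
    · exact Or.inr (fun hc => h (altOn_mono hc le_rfl (by omega)))
  · rcases hmax (x := x) h2 with h | h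
    · exact Or.inl h
    · refine Or.inr (fun hc => h (altOn_mono hc (by omega) (by omega)))

-- membership of (i-1, i+H-1) (case U2)
theorem memRC (h1 : 1 ≤ i) (h2 : i + 1 ≤ n') (hne : x (i - 1) ≠ x i)
    (hb1a : 2 ≤ tailAlt i x) (hb1b : x (i - 2) ≠ x i)
    (hb2 : headAlt (n' - i) (fun k => x (k + i)) ≤ 1 ∨ x (i - 1) = x (i + 1)) :
    (i - 1, i + headAlt (n' - i) (fun k => x (k + i)) - 1) ∈ altSegs n' x := by
  have hT := tailAlt_le (N := i) x
  have hH1 := headAlt_pos (fun k => x (k + i)) (N := n' - i) (by omega)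
  have hH := headAlt_le (N := n' - i) (fun k => x (k + i))
  rw [mem_altSegs]
  refine ⟨by omega, by omega, by omega, alt_right_cross h1 h2 hne hb2, ?_, ?_⟩
  · refine Or.inr ?_
    rw [show i - 1 - 1 = i - 2 by omega]
    exact break1 (by omega) hb1b le_rfl (by omega)
  · rcases hmax (x := x) h2 with h | h
    · exact Or.inl h
    · refine Or.inr (fun hc => h (altOn_mono hc (by omega) (by omega)))

-- membership of (i-T, i) (case U3)
theorem memLC (h1 : 1 ≤ i) (h2 : i + 1 ≤ n') (hne : x (i - 1) ≠ x i)
    (hb1 : tailAlt i x ≤ 1 ∨ x (i - 2) = x i)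
    (hb2a : 2 ≤ headAlt (n' - i) (fun k => x (k + i))) (hb2b : x (i - 1) ≠ x (i + 1)) :
    (i - tailAlt i x, i) ∈ altSegs n' x := by
  have hT1 := tailAlt_pos x h1
  have hT := tailAlt_le (N := i) x
  rw [mem_altSegs]
  refine ⟨by omega, by omega, by omega, alt_left_cross h1 hne hb1, ?_, ?_⟩
  · rcases tmax (x := x) h1 with h | h
    · exact Or.inl h
    · exact Or.inr (fun hc => h (altOn_mono hc le_rfl (by omega)))
  · exact Or.inr (break2 h1 hb2b (by omega) le_rfl)

-- membership of (i-1, i) (case U4)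
theorem memJ (h1 : 1 ≤ i) (h2 : i + 1 ≤ n') (hne : x (i - 1) ≠ x i)
    (hb1a : 2 ≤ tailAlt i x) (hb1b : x (i - 2) ≠ x i) (hb2b : x (i - 1) ≠ x (i + 1)) :
    (i - 1, i) ∈ altSegs n' x := by
  have hT := tailAlt_le (N := i) x
  rw [mem_altSegs]
  refine ⟨by omega, by omega, by omega, alt_junction h1 hne, ?_, ?_⟩
  · refine Or.inr ?_
    rw [show i - 1 - 1 = i - 2 by omega]
    exact break1 (by omega) hb1b le_rfl le_rfl
  · exact Or.inr (break2 h1 hb2b (by omega) (by omega))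

end Split4

section Split5

variable {m : ℕ} {x : ℕ → Fin m} {n' i : ℕ}

-- case E: junction symbols equal
theorem classE (h1 : 1 ≤ i) (h2 : i + 1 ≤ n') (he : x (i - 1) = x i) (p q : ℕ) :
    ((p, q) ∈ altSegs n' x ∧ p ≤ i ∧ i - 1 ≤ q) ↔
      ((p, q) = (i - tailAlt i x, i - 1) ∨
       (p, q) = (i, i + headAlt (n' - i) (fun k => x (k + i)) - 1)) := by
  have hT1 := tailAlt_pos x h1
  have hT := tailAlt_le (N := i) x
  have hH1 := headAlt_pos (fun k => x (k + i)) (N := n' - i) (by omega)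
  have hH := headAlt_le (N := n' - i) (fun k => x (k + i))
  constructor
  · rintro ⟨hmem, hp, hq⟩
    have hmem' := hmem
    rw [mem_altSegs] at hmem'
    obtain ⟨hpn, hqn, hpq, halt, hl, hr⟩ := hmem'
    rcases Nat.eq_or_lt_of_le hq with hq1 | hq1
    · -- q = i - 1
      left
      rw [Prod.mk.injEq]
      refine ⟨?_, by omega⟩
      rw [show q = i - 1 by omega] at hmem
      rw [show p = i - tailAlt i x from subA h1 h2 hmem]
    · -- q ≥ i
      rcases Nat.eq_or_lt_of_le hp with hp1 | hp1
      · right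
        rw [Prod.mk.injEq]
        rw [hp1] at hmem
        exact ⟨hp1.symm ▸ rfl, subB h1 h2 hmem⟩
      · -- p ≤ i - 1, q ≥ i : crossing, impossible
        exfalso
        have := halt.1 (i - 1) (by simp only [Finset.mem_Ico]; omega)
        rw [show i - 1 + 1 = i by omega] at this
        exact this he
  · rintro (h | h) <;> rw [Prod.mk.injEq] at h <;> obtain ⟨hp, hq⟩ := h
    · refine ⟨hp ▸ hq ▸ memTL h1 h2 ?_, by omega, by omega⟩
      intro hc
      have := hc.1 (i - 1) (by simp only [Finset.mem_Ico]; omega)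
      rw [show i - 1 + 1 = i by omega] at this
      exact this he
    · refine ⟨hp ▸ hq ▸ memHR h1 h2 ?_, by omega, by omega⟩
      intro hc
      have := hc.1 (i - 1) (by simp only [Finset.mem_Ico]; omega)
      rw [show i - 1 + 1 = i by omega] at this
      exact this he

end Split5

section Split6

variable {m : ℕ} {x : ℕ → Fin m} {n' i : ℕ}

-- case U1 : junction differs, no period break on either side
theorem classU1 (h1 : 1 ≤ i) (h2 : i + 1 ≤ n') (hne : x (i - 1) ≠ x i)
    (hb1 : tailAlt i x ≤ 1 ∨ x (i - 2) = x i)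
    (hb2 : headAlt (n' - i) (fun k => x (k + i)) ≤ 1 ∨ x (i - 1) = x (i + 1)) (p q : ℕ) :
    ((p, q) ∈ altSegs n' x ∧ p ≤ i ∧ i - 1 ≤ q) ↔
      (p, q) = (i - tailAlt i x, i + headAlt (n' - i) (fun k => x (k + i)) - 1) := by
  have hT1 := tailAlt_pos x h1
  have hT := tailAlt_le (N := i) x
  have hH1 := headAlt_pos (fun k => x (k + i)) (N := n' - i) (by omega)
  have hH := headAlt_le (N := n' - i) (fun k => x (k + i))
  set T := tailAlt i x with hTdef
  set H := headAlt (n' - i) (fun k => x (k + i)) with hHdef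
  constructor
  · rintro ⟨hmem, hp, hq⟩
    have hmem' := hmem
    rw [mem_altSegs] at hmem'
    obtain ⟨hpn, hqn, hpq, halt, hl, hr⟩ := hmem'
    rcases Nat.eq_or_lt_of_le hq with hq1 | hq1
    · -- q = i - 1 : impossible under ¬β1
      exfalso
      have hpi : p = i - T := by
        rw [show q = i - 1 by omega] at hmem
        exact subA h1 h2 hmem
      rcases hr with h | h
      · omega
      · refine h ?_
        rw [show q + 1 = i by omega, hpi]
        exact alt_left_cross h1 hne hb1
    · rcases Nat.eq_or_lt_of_le hp with hp1 | hp1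
      · -- p = i : impossible under ¬β2
        exfalso
        rcases hl with h | h
        · omega
        · refine h ?_
          have hqH : q ≤ i + H - 1 := by
            have := (hchar h2 (by omega) hqn).1 (altOn_mono halt (by omega) le_rfl)
            omega
          exact altOn_mono (alt_right_cross h1 h2 hne hb2) (by omega) hqH
      · -- crossing
        have hAl : IsAltOn x p (i - 1) := altOn_mono halt le_rfl (by omega)
        have hpT : i - T ≤ p := (tchar h1 (by omega)).1 hAl
        have hqH : q ≤ i + H - 1 := by
          have := (hchar h2 (by omega) hqn).1 (altOn_mono halt (by omega) le_rfl)
          omega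
        have hcross := alt_cross h1 h2 hne hb1 hb2
        have hpe : p = i - T := by
          rcases Nat.eq_or_lt_of_le hpT with h | h
          · omega
          · exfalso
            rcases hl with h' | h'
            · omega
            · exact h' (altOn_mono hcross (by omega) hqH)
        have hqe : q = i + H - 1 := by
          rcases Nat.eq_or_lt_of_le hqH with h | h
          · omega
          · exfalso
            rcases hr with h' | h'
            · omega
            · exact h' (altOn_mono hcross (by omega) (by omega))
        rw [Prod.mk.injEq]
        exact ⟨hpe, hqe⟩
  · intro h
    rw [Prod.mk.injEq] at h
    obtain ⟨hp, hq⟩ := h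
    exact ⟨hp ▸ hq ▸ memCross h1 h2 hne hb1 hb2, by omega, by omega⟩

end Split6

section Split7

variable {m : ℕ} {x : ℕ → Fin m} {n' i : ℕ}

-- case U2 : break on the left side only
theorem classU2 (h1 : 1 ≤ i) (h2 : i + 1 ≤ n') (hne : x (i - 1) ≠ x i)
    (hb1a : 2 ≤ tailAlt i x) (hb1b : x (i - 2) ≠ x i)
    (hb2 : headAlt (n' - i) (fun k => x (k + i)) ≤ 1 ∨ x (i - 1) = x (i + 1)) (p q : ℕ) :
    ((p, q) ∈ altSegs n' x ∧ p ≤ i ∧ i - 1 ≤ q) ↔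
      ((p, q) = (i - tailAlt i x, i - 1) ∨
       (p, q) = (i - 1, i + headAlt (n' - i) (fun k => x (k + i)) - 1)) := by
  have hT := tailAlt_le (N := i) x
  have hH1 := headAlt_pos (fun k => x (k + i)) (N := n' - i) (by omega)
  have hH := headAlt_le (N := n' - i) (fun k => x (k + i))
  set T := tailAlt i x with hTdef
  set H := headAlt (n' - i) (fun k => x (k + i)) with hHdef
  constructor
  · rintro ⟨hmem, hp, hq⟩
    have hmem' := hmem
    rw [mem_altSegs] at hmem'
    obtain ⟨hpn, hqn, hpq, halt, hl, hr⟩ := hmem'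
    rcases Nat.eq_or_lt_of_le hq with hq1 | hq1
    · -- q = i - 1
      left
      rw [Prod.mk.injEq]
      refine ⟨?_, by omega⟩
      rw [show q = i - 1 by omega] at hmem
      exact subA h1 h2 hmem
    · rcases Nat.eq_or_lt_of_le hp with hp1 | hp1
      · -- p = i : impossible under ¬β2
        exfalso
        rcases hl with h | h
        · omega
        · refine h ?_
          have hqH : q ≤ i + H - 1 := by
            have := (hchar h2 (by omega) hqn).1 (altOn_mono halt (by omega) le_rfl)
            omega
          exact altOn_mono (alt_right_cross h1 h2 hne hb2) (by omega) hqH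
      · -- crossing : p = i - 1, q = i + H - 1
        right
        have hpe : p = i - 1 := by
          rcases Nat.lt_or_ge p (i - 1) with h | h
          · exact absurd halt (break1 (by omega) hb1b (by omega) (by omega))
          · omega
        have hqH : q ≤ i + H - 1 := by
          have := (hchar h2 (by omega) hqn).1 (altOn_mono halt (by omega) le_rfl)
          omega
        have hqe : q = i + H - 1 := by
          rcases Nat.eq_or_lt_of_le hqH with h | h
          · omega
          · exfalso
            rcases hr with h' | h'
            · omega
            · exact h' (altOn_mono (alt_right_cross h1 h2 hne hb2) (by omega) (by omega))
        rw [Prod.mk.injEq]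
        exact ⟨hpe, hqe⟩
  · rintro (h | h) <;> rw [Prod.mk.injEq] at h <;> obtain ⟨hp, hq⟩ := h
    · refine ⟨hp ▸ hq ▸ memTL h1 h2 ?_, by omega, by omega⟩
      exact break1 (by omega) hb1b (by omega) le_rfl
    · exact ⟨hp ▸ hq ▸ memRC h1 h2 hne hb1a hb1b hb2, by omega, by omega⟩

-- case U3 : break on the right side only
theorem classU3 (h1 : 1 ≤ i) (h2 : i + 1 ≤ n') (hne : x (i - 1) ≠ x i)
    (hb1 : tailAlt i x ≤ 1 ∨ x (i - 2) = x i)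
    (hb2a : 2 ≤ headAlt (n' - i) (fun k => x (k + i))) (hb2b : x (i - 1) ≠ x (i + 1)) (p q : ℕ) :
    ((p, q) ∈ altSegs n' x ∧ p ≤ i ∧ i - 1 ≤ q) ↔
      ((p, q) = (i - tailAlt i x, i) ∨
       (p, q) = (i, i + headAlt (n' - i) (fun k => x (k + i)) - 1)) := by
  have hT1 := tailAlt_pos x h1
  have hT := tailAlt_le (N := i) x
  have hH := headAlt_le (N := n' - i) (fun k => x (k + i))
  set T := tailAlt i x with hTdef
  set H := headAlt (n' - i) (fun k => x (k + i)) with hHdef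
  constructor
  · rintro ⟨hmem, hp, hq⟩
    have hmem' := hmem
    rw [mem_altSegs] at hmem'
    obtain ⟨hpn, hqn, hpq, halt, hl, hr⟩ := hmem'
    rcases Nat.eq_or_lt_of_le hq with hq1 | hq1
    · -- q = i - 1 : impossible under ¬β1
      exfalso
      have hpi : p = i - T := by
        rw [show q = i - 1 by omega] at hmem
        exact subA h1 h2 hmem
      rcases hr with h | h
      · omega
      · refine h ?_
        rw [show q + 1 = i by omega, hpi]
        exact alt_left_cross h1 hne hb1
    · rcases Nat.eq_or_lt_of_le hp with hp1 | hp1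
      · -- p = i
        right
        rw [Prod.mk.injEq]
        rw [hp1] at hmem
        exact ⟨hp1.symm ▸ rfl, subB h1 h2 hmem⟩
      · -- crossing : q = i, p = i - T
        left
        have hqe : q = i := by
          rcases Nat.lt_or_ge i q with h | h
          · exact absurd halt (break2 h1 hb2b (by omega) (by omega))
          · omega
        have hAl : IsAltOn x p (i - 1) := altOn_mono halt le_rfl (by omega)
        have hpT : i - T ≤ p := (tchar h1 (by omega)).1 hAl
        have hpe : p = i - T := by
          rcases Nat.eq_or_lt_of_le hpT with h | h
          · omega
          · exfalso
            rcases hl with h' | h'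
            · omega
            · refine h' ?_
              rw [hqe]
              exact altOn_mono (alt_left_cross h1 hne hb1) (by omega) le_rfl
        rw [Prod.mk.injEq]
        exact ⟨hpe, hqe⟩
  · rintro (h | h) <;> rw [Prod.mk.injEq] at h <;> obtain ⟨hp, hq⟩ := h
    · refine ⟨?_, by omega, by omega⟩
      rw [hp, hq]
      exact memLC h1 h2 hne hb1 hb2a hb2b
    · refine ⟨hp ▸ hq ▸ memHR h1 h2 ?_, by omega, by omega⟩
      exact break2 h1 hb2b le_rfl (by omega)

-- case U4 : breaks on both sides
theorem classU4 (h1 : 1 ≤ i) (h2 : i + 1 ≤ n') (hne : x (i - 1) ≠ x i)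
    (hb1a : 2 ≤ tailAlt i x) (hb1b : x (i - 2) ≠ x i)
    (hb2a : 2 ≤ headAlt (n' - i) (fun k => x (k + i))) (hb2b : x (i - 1) ≠ x (i + 1)) (p q : ℕ) :
    ((p, q) ∈ altSegs n' x ∧ p ≤ i ∧ i - 1 ≤ q) ↔
      ((p, q) = (i - tailAlt i x, i - 1) ∨ (p, q) = (i - 1, i) ∨
       (p, q) = (i, i + headAlt (n' - i) (fun k => x (k + i)) - 1)) := by
  have hT := tailAlt_le (N := i) x
  have hH := headAlt_le (N := n' - i) (fun k => x (k + i))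
  set T := tailAlt i x with hTdef
  set H := headAlt (n' - i) (fun k => x (k + i)) with hHdef
  constructor
  · rintro ⟨hmem, hp, hq⟩
    have hmem' := hmem
    rw [mem_altSegs] at hmem'
    obtain ⟨hpn, hqn, hpq, halt, hl, hr⟩ := hmem'
    rcases Nat.eq_or_lt_of_le hq with hq1 | hq1
    · -- q = i - 1
      left
      rw [Prod.mk.injEq]
      refine ⟨?_, by omega⟩
      rw [show q = i - 1 by omega] at hmem
      exact subA h1 h2 hmem
    · rcases Nat.eq_or_lt_of_le hp with hp1 | hp1
      · -- p = i
        right; right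
        rw [Prod.mk.injEq]
        rw [hp1] at hmem
        exact ⟨hp1.symm ▸ rfl, subB h1 h2 hmem⟩
      · -- crossing : p = i - 1, q = i
        right; left
        have hpe : p = i - 1 := by
          rcases Nat.lt_or_ge p (i - 1) with h | h
          · exact absurd halt (break1 (by omega) hb1b (by omega) (by omega))
          · omega
        have hqe : q = i := by
          rcases Nat.lt_or_ge i q with h | h
          · exact absurd halt (break2 h1 hb2b (by omega) (by omega))
          · omega
        rw [Prod.mk.injEq]
        exact ⟨hpe, hqe⟩
  · rintro (h | h | h) <;> rw [Prod.mk.injEq] at h <;> obtain ⟨hp, hq⟩ := h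
    · refine ⟨hp ▸ hq ▸ memTL h1 h2 ?_, by omega, by omega⟩
      exact break1 (by omega) hb1b (by omega) le_rfl
    · refine ⟨?_, by omega, by omega⟩
      rw [hp, hq]
      exact memJ h1 h2 hne hb1a hb1b hb2b
    · refine ⟨hp ▸ hq ▸ memHR h1 h2 ?_, by omega, by omega⟩
      exact break2 h1 hb2b le_rfl (by omega)

end Split7

section Split8

variable {m : ℕ} {x : ℕ → Fin m} {n' i : ℕ}

theorem lastSplit {N : ℕ} {w : ℕ → Fin m} (hN : 1 ≤ N) (f : ℕ × ℕ → ℕ) :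
    ∑ s ∈ altSegs N w, f s
      = ∑ s ∈ (altSegs N w).filter (fun s => s.2 + 1 < N), f s
          + f (N - tailAlt N w, N - 1) := by
  rw [← Finset.sum_filter_add_sum_filter_not (altSegs N w) (fun s => s.2 + 1 < N) f]
  congr 1
  have : (altSegs N w).filter (fun s => ¬ s.2 + 1 < N) = {(N - tailAlt N w, N - 1)} := by
    ext ⟨p, q⟩
    simp only [Finset.mem_filter, Finset.mem_singleton, Prod.mk.injEq]
    constructor
    · rintro ⟨hmem, hq⟩
      have hmem' := hmem
      rw [mem_altSegs] at hmem'
      obtain ⟨hpn, hqn, hpq, halt, hl, hr⟩ := hmem'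
      have hq1 : q = N - 1 := by omega
      subst hq1
      exact ⟨seg_end hN hpq halt hl, rfl⟩
    · rintro ⟨hp, hq⟩
      subst hp; subst hq
      exact ⟨seg_end_mem hN, by omega⟩
  rw [this, Finset.sum_singleton]

theorem firstSplit {N : ℕ} {w : ℕ → Fin m} (hN : 1 ≤ N) (f : ℕ × ℕ → ℕ) :
    ∑ s ∈ altSegs N w, f s
      = ∑ s ∈ (altSegs N w).filter (fun s => 1 ≤ s.1), f s
          + f (0, headAlt N w - 1) := by
  rw [← Finset.sum_filter_add_sum_filter_not (altSegs N w) (fun s => 1 ≤ s.1) f]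
  congr 1
  have : (altSegs N w).filter (fun s => ¬ 1 ≤ s.1) = {(0, headAlt N w - 1)} := by
    ext ⟨p, q⟩
    simp only [Finset.mem_filter, Finset.mem_singleton, Prod.mk.injEq]
    constructor
    · rintro ⟨hmem, hp⟩
      have hp0 : p = 0 := by omega
      subst hp0
      have hmem' := hmem
      rw [mem_altSegs] at hmem'
      obtain ⟨hpn, hqn, hpq, halt, hl, hr⟩ := hmem'
      exact ⟨rfl, seg_start hN hqn halt hr⟩
    · rintro ⟨hp, hq⟩
      subst hp; subst hq
      exact ⟨seg_start_mem hN, by omega⟩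
  rw [this, Finset.sum_singleton]

theorem sum_split (h1 : 1 ≤ i) (h2 : i + 1 ≤ n') (f : ℕ × ℕ → ℕ)
    (hf : ∀ p q, f (p + i, q + i) = f (p, q)) (M : Finset (ℕ × ℕ))
    (hM : ∀ p q, ((p, q) ∈ altSegs n' x ∧ p ≤ i ∧ i - 1 ≤ q) ↔ (p, q) ∈ M) :
    ∑ s ∈ altSegs n' x, f s + f (i - tailAlt i x, i - 1)
        + f (i, i + headAlt (n' - i) (fun k => x (k + i)) - 1)
      = ∑ s ∈ altSegs i x, f s
          + ∑ s ∈ altSegs (n' - i) (fun k => x (k + i)), f s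
          + ∑ s ∈ M, f s := by
  have hH1 := headAlt_pos (fun k => x (k + i)) (N := n' - i) (by omega)
  set A := (altSegs i x).filter (fun s => s.2 + 1 < i) with hA
  set B := ((altSegs (n' - i) (fun k => x (k + i))).filter (fun s => 1 ≤ s.1)).image
      (fun s => (s.1 + i, s.2 + i)) with hB
  have memB : ∀ p q : ℕ, (p, q) ∈ B ↔
      (i + 1 ≤ p ∧ p ≤ q ∧ (p - i, q - i) ∈ altSegs (n' - i) (fun k => x (k + i))) := by
    intro p q
    rw [hB]
    simp only [Finset.mem_image, Finset.mem_filter, Prod.mk.injEq, Prod.exists]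
    constructor
    · rintro ⟨a, b, ⟨hab, ha⟩, hpe, hqe⟩
      have hab' := hab
      rw [mem_altSegs] at hab'
      refine ⟨by omega, by omega, ?_⟩
      rw [show p - i = a by omega, show q - i = b by omega]
      exact hab
    · rintro ⟨hp, hpq, hmem⟩
      have hmem' := hmem
      rw [mem_altSegs] at hmem'
      exact ⟨p - i, q - i, ⟨hmem, by omega⟩, by omega, by omega⟩
  have key : altSegs n' x = A ∪ B ∪ M := by
    ext ⟨p, q⟩
    simp only [Finset.mem_union]
    constructor
    · intro hmem
      have hmem' := hmem
      rw [mem_altSegs] at hmem'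
      obtain ⟨hpn, hqn, hpq, halt, hl, hr⟩ := hmem'
      by_cases hc1 : q + 1 < i
      · left; left
        rw [hA, Finset.mem_filter]
        exact ⟨(segL h1 h2 hc1).1 hmem, hc1⟩
      · by_cases hc2 : i + 1 ≤ p
        · left; right
          rw [memB]
          exact ⟨hc2, hpq, (segR h1 h2 hc2 hpq).1 hmem⟩
        · right
          exact (hM p q).1 ⟨hmem, by omega, by omega⟩
    · rintro ((h | h) | h)
      · rw [hA, Finset.mem_filter] at h
        exact (segL h1 h2 h.2).2 h.1
      · rw [memB] at h
        obtain ⟨hp, hpq, hmem⟩ := h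
        exact (segR h1 h2 hp hpq).2 hmem
      · exact ((hM p q).2 h).1
  have dAB : Disjoint A B := by
    rw [Finset.disjoint_left]
    rintro ⟨p, q⟩ hpA hpB
    rw [hA, Finset.mem_filter] at hpA
    rw [memB] at hpB
    have := hpA.2
    omega
  have dABM : Disjoint (A ∪ B) M := by
    rw [Finset.disjoint_left]
    rintro ⟨p, q⟩ hpAB hpM
    have hM' := (hM p q).2 hpM
    rcases Finset.mem_union.1 hpAB with h | h
    · rw [hA, Finset.mem_filter] at h
      have := h.2
      omega
    · rw [memB] at h
      omega
  have sumB : ∑ s ∈ B, f s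
      = ∑ s ∈ (altSegs (n' - i) (fun k => x (k + i))).filter (fun s => 1 ≤ s.1), f s := by
    rw [hB, Finset.sum_image]
    · exact Finset.sum_congr rfl (fun s _ => hf s.1 s.2)
    · rintro ⟨a, b⟩ _ ⟨c, d⟩ _ h
      rw [Prod.mk.injEq] at h ⊢
      omega
  have e1 := lastSplit (N := i) (w := x) h1 f
  rw [← hA] at e1
  have e2 := firstSplit (N := n' - i) (w := fun k => x (k + i)) (by omega) f
  have e3 : f (i, i + headAlt (n' - i) (fun k => x (k + i)) - 1)
      = f (0, headAlt (n' - i) (fun k => x (k + i)) - 1) := by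
    rw [show ((i : ℕ), i + headAlt (n' - i) (fun k => x (k + i)) - 1)
        = ((0 : ℕ) + i, (headAlt (n' - i) (fun k => x (k + i)) - 1) + i) by
      rw [Prod.mk.injEq]; omega]
    exact hf _ _
  rw [key, Finset.sum_union dABM, Finset.sum_union dAB, sumB, e1, e2, e3]
  omega

end Split8

section Split9

variable {m : ℕ} {x : ℕ → Fin m} {n' i : ℕ}

theorem rho_split (h1 : 1 ≤ i) (h2 : i + 1 ≤ n') :
    rho n' x + 1 = rho i x + rho (n' - i) (fun k => x (k + i))
      + (if x (i - 1) = x i then 0 else 1) := by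
  have eR : rho (n' - i) (fun k => x (k + i))
      = 1 + ((Finset.Ico i (n' - 1)).filter (fun k => x k ≠ x (k + 1))).card := by
    unfold rho
    congr 1
    apply Finset.card_bij (fun a _ => a + i)
    · intro a ha
      simp only [Finset.mem_filter, Finset.mem_range] at ha
      simp only [Finset.mem_filter, Finset.mem_Ico]
      refine ⟨by omega, ?_⟩
      have := ha.2
      rwa [show a + i + 1 = a + 1 + i by omega]
    · intro a ha b hb hab
      omega
    · intro b hb
      simp only [Finset.mem_filter, Finset.mem_Ico] at hb
      refine ⟨b - i, ?_, by omega⟩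
      simp only [Finset.mem_filter, Finset.mem_range]
      refine ⟨by omega, ?_⟩
      have := hb.2
      rwa [show b - i + i = b by omega, show b - i + 1 + i = b + 1 by omega]
  have eL : rho i x = 1 + ((Finset.Ico 0 (i - 1)).filter (fun k => x k ≠ x (k + 1))).card := by
    unfold rho
    rw [Finset.range_eq_Ico]
  have eF : rho n' x = 1 + ((Finset.Ico 0 (i - 1)).filter (fun k => x k ≠ x (k + 1))).card
      + ((Finset.Ico (i - 1) i).filter (fun k => x k ≠ x (k + 1))).card
      + ((Finset.Ico i (n' - 1)).filter (fun k => x k ≠ x (k + 1))).card := by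
    unfold rho
    rw [Finset.range_eq_Ico]
    rw [show Finset.Ico 0 (n' - 1)
        = Finset.Ico 0 (i - 1) ∪ (Finset.Ico (i - 1) i ∪ Finset.Ico i (n' - 1)) by
      rw [Finset.Ico_union_Ico_eq_Ico (by omega) (by omega),
        Finset.Ico_union_Ico_eq_Ico (by omega) (by omega)]]
    rw [Finset.filter_union, Finset.filter_union]
    rw [Finset.card_union_of_disjoint, Finset.card_union_of_disjoint]
    · omega
    · rw [Finset.disjoint_left]
      intro a ha hb
      simp only [Finset.mem_filter, Finset.mem_Ico] at ha hb
      omega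
    · rw [Finset.disjoint_left]
      intro a ha hb
      simp only [Finset.mem_filter, Finset.mem_union, Finset.mem_Ico] at ha hb
      omega
  have eM : ((Finset.Ico (i - 1) i).filter (fun k => x k ≠ x (k + 1))).card
      = if x (i - 1) = x i then 0 else 1 := by
    have eico : Finset.Ico (i - 1) i = {i - 1} := by
      ext a
      simp only [Finset.mem_Ico, Finset.mem_singleton]
      omega
    rw [eico, Finset.filter_singleton]
    by_cases he : x (i - 1) = x i
    · rw [if_neg, if_pos he]
      · simp
      · simp only [ne_eq, not_not]
        rwa [show i - 1 + 1 = i by omega]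
    · rw [if_pos, if_neg he]
      · simp
      · simp only [ne_eq]
        rwa [show i - 1 + 1 = i by omega]
  omega

end Split9

section Final

theorem fM_eq {m : ℕ} (n : ℕ) {n' i : ℕ} (x : ℕ → Fin m) (d1 d2 d3 d4 : ℝ)
    (hrho : (rho n' x : ℝ) = rho i x + rho (n' - i) (fun k => x (k + i)) + d1)
    (ha : (aCount n' x : ℝ) = aCount i x + aCount (n' - i) (fun k => x (k + i)) + d2)
    (hS : (sumLen n' x : ℝ) = sumLen i x + sumLen (n' - i) (fun k => x (k + i)) + d3)
    (hQ : (sumLenSq n' x : ℝ) = sumLenSq i x + sumLenSq (n' - i) (fun k => x (k + i)) + d4) :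
    fM m n n' x = fM m n i x + fM m n (n' - i) (fun k => x (k + i))
      + d1 * ((m : ℝ) * n - n - 1) - d4 / 2 + 3 / 2 * d3 - d2 := by
  simp only [fM]
  rw [hrho, ha, hS, hQ]
  ring

set_option maxHeartbeats 2000000 in
theorem main_split {m : ℕ} (x : ℕ → Fin m) (n n' i : ℕ)
    (h1 : 1 ≤ i) (h2 : i + 1 ≤ n') :
    (x (i - 1) = x i →
      fM m n n' x = fM m n i x + fM m n (n' - i) (fun k => x (k + i)) - (m : ℝ) * n + n + 1)
    ∧ (x (i - 1) ≠ x i →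
      (fM m n n' x ≤ fM m n i x + fM m n (n' - i) (fun k => x (k + i)))
      ∧ fM m n n' x ≥ fM m n i x + fM m n (n' - i) (fun k => x (k + i)) + 1
          - (tailAlt i x : ℝ) * (headAlt (n' - i) (fun k => x (k + i)) : ℝ)) := by
  have hT1 := tailAlt_pos x h1
  have hT := tailAlt_le (N := i) x
  have hH1 := headAlt_pos (fun k => x (k + i)) (N := n' - i) (by omega)
  have hH := headAlt_le (N := n' - i) (fun k => x (k + i))
  set T := tailAlt i x with hTdef
  set H := headAlt (n' - i) (fun k => x (k + i)) with hHdef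
  have hTr : (1 : ℝ) ≤ (T : ℝ) := by exact_mod_cast hT1
  have hHr : (1 : ℝ) ≤ (H : ℝ) := by exact_mod_cast hH1
  have hflen : ∀ p q : ℕ, (fun s : ℕ × ℕ => s.2 - s.1 + 1) (p + i, q + i)
      = (fun s : ℕ × ℕ => s.2 - s.1 + 1) (p, q) := by
    intro p q; simp only []; omega
  have hfsq : ∀ p q : ℕ, (fun s : ℕ × ℕ => (s.2 - s.1 + 1) ^ 2) (p + i, q + i)
      = (fun s : ℕ × ℕ => (s.2 - s.1 + 1) ^ 2) (p, q) := by
    intro p q; simp only []; rw [show q + i - (p + i) = q - p by omega]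
  have hrho := rho_split (x := x) h1 h2
  constructor
  · -- equal junction
    intro he
    rw [if_pos he] at hrho
    have hM : ∀ p q : ℕ, ((p, q) ∈ altSegs n' x ∧ p ≤ i ∧ i - 1 ≤ q) ↔
        (p, q) ∈ ({(i - T, i - 1), (i, i + H - 1)} : Finset (ℕ × ℕ)) := by
      intro p q
      rw [classE h1 h2 he p q]
      simp only [Finset.mem_insert, Finset.mem_singleton]
      exact Iff.rfl
    have hd : ((i - T, i - 1) : ℕ × ℕ) ∉ ({(i, i + H - 1)} : Finset (ℕ × ℕ)) := by
      simp only [Finset.mem_singleton]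
      intro hc; rw [Prod.mk.injEq] at hc; omega
    have hsum : ∀ f : ℕ × ℕ → ℕ, (∀ p q, f (p + i, q + i) = f (p, q)) →
        ∑ s ∈ altSegs n' x, f s + f (i - T, i - 1) + f (i, i + H - 1)
          = ∑ s ∈ altSegs i x, f s + ∑ s ∈ altSegs (n' - i) (fun k => x (k + i)), f s
              + (f (i - T, i - 1) + f (i, i + H - 1)) := by
      intro f hf
      rw [sum_split h1 h2 f hf _ hM, Finset.sum_insert hd, Finset.sum_singleton]
    have ha := hsum (fun _ => 1) (fun _ _ => rfl)
    have hs := hsum (fun s => s.2 - s.1 + 1) hflen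
    have hq := hsum (fun s => (s.2 - s.1 + 1) ^ 2) hfsq
    simp only [← Finset.card_eq_sum_ones] at ha
    simp only [] at hs hq
    have e1 : (rho n' x : ℝ) = (rho i x : ℝ) + (rho (n' - i) (fun k => x (k + i)) : ℝ)
        + (-1) := by
      have h' : ((rho n' x : ℕ) : ℝ) + 1
          = ((rho i x : ℕ) : ℝ) + ((rho (n' - i) (fun k => x (k + i)) : ℕ) : ℝ) + 0 := by
        exact_mod_cast hrho
      linarith
    have e2 : (aCount n' x : ℝ) = (aCount i x : ℝ)
        + (aCount (n' - i) (fun k => x (k + i)) : ℝ) + 0 := by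
      have h' : ((aCount n' x : ℕ) : ℝ) + 1 + 1
          = ((aCount i x : ℕ) : ℝ) + ((aCount (n' - i) (fun k => x (k + i)) : ℕ) : ℝ)
            + (1 + 1) := by
        exact_mod_cast (show aCount n' x + 1 + 1 = aCount i x
          + aCount (n' - i) (fun k => x (k + i)) + (1 + 1) by
            simp only [aCount]; exact ha)
      linarith
    have e3 : (sumLen n' x : ℝ) = (sumLen i x : ℝ)
        + (sumLen (n' - i) (fun k => x (k + i)) : ℝ) + 0 := by
      have h' : sumLen n' x + (i - 1 - (i - T) + 1) + (i + H - 1 - i + 1)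
          = sumLen i x + sumLen (n' - i) (fun k => x (k + i))
            + (i - 1 - (i - T) + 1 + (i + H - 1 - i + 1)) := by
        simp only [sumLen]; exact hs
      rw [show i - 1 - (i - T) + 1 = T by omega, show i + H - 1 - i + 1 = H by omega] at h'
      have h'' : ((sumLen n' x : ℕ) : ℝ) + T + H
          = ((sumLen i x : ℕ) : ℝ) + ((sumLen (n' - i) (fun k => x (k + i)) : ℕ) : ℝ)
            + ((T : ℝ) + (H : ℝ)) := by exact_mod_cast h'
      linarith
    have e4 : (sumLenSq n' x : ℝ) = (sumLenSq i x : ℝ)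
        + (sumLenSq (n' - i) (fun k => x (k + i)) : ℝ) + 0 := by
      have h' : sumLenSq n' x + (i - 1 - (i - T) + 1) ^ 2 + (i + H - 1 - i + 1) ^ 2
          = sumLenSq i x + sumLenSq (n' - i) (fun k => x (k + i))
            + ((i - 1 - (i - T) + 1) ^ 2 + (i + H - 1 - i + 1) ^ 2) := by
        simp only [sumLenSq]; exact hq
      rw [show i - 1 - (i - T) + 1 = T by omega, show i + H - 1 - i + 1 = H by omega] at h'
      have h'' : ((sumLenSq n' x : ℕ) : ℝ) + (T : ℝ) ^ 2 + (H : ℝ) ^ 2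
          = ((sumLenSq i x : ℕ) : ℝ) + ((sumLenSq (n' - i) (fun k => x (k + i)) : ℕ) : ℝ)
            + ((T : ℝ) ^ 2 + (H : ℝ) ^ 2) := by exact_mod_cast h'
      linarith
    have key := fM_eq n x (-1) 0 0 0 e1 e2 e3 e4
    rw [key]; ring
  · -- unequal junction
    intro hne
    rw [if_neg hne] at hrho
    have e1 : (rho n' x : ℝ) = (rho i x : ℝ) + (rho (n' - i) (fun k => x (k + i)) : ℝ)
        + 0 := by
      have h' : ((rho n' x : ℕ) : ℝ) + 1
          = ((rho i x : ℕ) : ℝ) + ((rho (n' - i) (fun k => x (k + i)) : ℕ) : ℝ) + 1 := by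
        exact_mod_cast hrho
      linarith
    by_cases c1 : 2 ≤ T ∧ x (i - 2) ≠ x i
    · by_cases c2 : 2 ≤ H ∧ x (i - 1) ≠ x (i + 1)
      · -- case U4
        have hTr2 : (2 : ℝ) ≤ (T : ℝ) := by exact_mod_cast c1.1
        have hHr2 : (2 : ℝ) ≤ (H : ℝ) := by exact_mod_cast c2.1
        have hM : ∀ p q : ℕ, ((p, q) ∈ altSegs n' x ∧ p ≤ i ∧ i - 1 ≤ q) ↔
            (p, q) ∈ ({(i - T, i - 1), (i - 1, i), (i, i + H - 1)} : Finset (ℕ × ℕ)) := by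
          intro p q
          rw [classU4 h1 h2 hne c1.1 c1.2 c2.1 c2.2 p q]
          simp only [Finset.mem_insert, Finset.mem_singleton]
          exact Iff.rfl
        have hd1 : ((i - T, i - 1) : ℕ × ℕ)
            ∉ ({(i - 1, i), (i, i + H - 1)} : Finset (ℕ × ℕ)) := by
          simp only [Finset.mem_insert, Finset.mem_singleton]
          rintro (hc | hc) <;> rw [Prod.mk.injEq] at hc <;> omega
        have hd2 : ((i - 1, i) : ℕ × ℕ) ∉ ({(i, i + H - 1)} : Finset (ℕ × ℕ)) := by
          simp only [Finset.mem_singleton]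
          intro hc; rw [Prod.mk.injEq] at hc; omega
        have hsum : ∀ f : ℕ × ℕ → ℕ, (∀ p q, f (p + i, q + i) = f (p, q)) →
            ∑ s ∈ altSegs n' x, f s + f (i - T, i - 1) + f (i, i + H - 1)
              = ∑ s ∈ altSegs i x, f s + ∑ s ∈ altSegs (n' - i) (fun k => x (k + i)), f s
                  + (f (i - T, i - 1) + (f (i - 1, i) + f (i, i + H - 1))) := by
          intro f hf
          rw [sum_split h1 h2 f hf _ hM, Finset.sum_insert hd1, Finset.sum_insert hd2,
            Finset.sum_singleton]
        have ha := hsum (fun _ => 1) (fun _ _ => rfl)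
        have hs := hsum (fun s => s.2 - s.1 + 1) hflen
        have hq := hsum (fun s => (s.2 - s.1 + 1) ^ 2) hfsq
        simp only [← Finset.card_eq_sum_ones] at ha
        simp only [] at hs hq
        have e2 : (aCount n' x : ℝ) = (aCount i x : ℝ)
            + (aCount (n' - i) (fun k => x (k + i)) : ℝ) + 1 := by
          have h' : ((aCount n' x : ℕ) : ℝ) + 1 + 1
              = ((aCount i x : ℕ) : ℝ) + ((aCount (n' - i) (fun k => x (k + i)) : ℕ) : ℝ)
                + (1 + (1 + 1)) := by
            exact_mod_cast (show aCount n' x + 1 + 1 = aCount i x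
              + aCount (n' - i) (fun k => x (k + i)) + (1 + (1 + 1)) by
                simp only [aCount]; exact ha)
          linarith
        have e3 : (sumLen n' x : ℝ) = (sumLen i x : ℝ)
            + (sumLen (n' - i) (fun k => x (k + i)) : ℝ) + 2 := by
          have h' : sumLen n' x + (i - 1 - (i - T) + 1) + (i + H - 1 - i + 1)
              = sumLen i x + sumLen (n' - i) (fun k => x (k + i))
                + (i - 1 - (i - T) + 1 + (i - (i - 1) + 1 + (i + H - 1 - i + 1))) := by
            simp only [sumLen]; exact hs
          rw [show i - 1 - (i - T) + 1 = T by omega, show i + H - 1 - i + 1 = H by omega,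
            show i - (i - 1) + 1 = 2 by omega] at h'
          have h'' : ((sumLen n' x : ℕ) : ℝ) + T + H
              = ((sumLen i x : ℕ) : ℝ) + ((sumLen (n' - i) (fun k => x (k + i)) : ℕ) : ℝ)
                + ((T : ℝ) + (2 + (H : ℝ))) := by exact_mod_cast h'
          linarith
        have e4 : (sumLenSq n' x : ℝ) = (sumLenSq i x : ℝ)
            + (sumLenSq (n' - i) (fun k => x (k + i)) : ℝ) + 4 := by
          have h' : sumLenSq n' x + (i - 1 - (i - T) + 1) ^ 2 + (i + H - 1 - i + 1) ^ 2
              = sumLenSq i x + sumLenSq (n' - i) (fun k => x (k + i))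
                + ((i - 1 - (i - T) + 1) ^ 2
                    + ((i - (i - 1) + 1) ^ 2 + (i + H - 1 - i + 1) ^ 2)) := by
            simp only [sumLenSq]; exact hq
          rw [show i - 1 - (i - T) + 1 = T by omega, show i + H - 1 - i + 1 = H by omega,
            show i - (i - 1) + 1 = 2 by omega] at h'
          have h'' : ((sumLenSq n' x : ℕ) : ℝ) + (T : ℝ) ^ 2 + (H : ℝ) ^ 2
              = ((sumLenSq i x : ℕ) : ℝ)
                + ((sumLenSq (n' - i) (fun k => x (k + i)) : ℕ) : ℝ)
                + ((T : ℝ) ^ 2 + ((2 : ℝ) ^ 2 + (H : ℝ) ^ 2)) := by exact_mod_cast h'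
          linarith
        have key := fM_eq n x 0 1 2 4 e1 e2 e3 e4
        have key2 : fM m n n' x = fM m n i x + fM m n (n' - i) (fun k => x (k + i)) + 0 := by
          rw [key]; ring
        have hTH : (4 : ℝ) ≤ (T : ℝ) * (H : ℝ) := by
          have := mul_le_mul hTr2 hHr2 (by norm_num) (by positivity)
          linarith
        constructor
        · linarith [key2]
        · rw [ge_iff_le]; linarith [key2, hTH]
      · -- case U2
        have hTr2 : (2 : ℝ) ≤ (T : ℝ) := by exact_mod_cast c1.1
        have hb2 : H ≤ 1 ∨ x (i - 1) = x (i + 1) := by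
          by_cases h : 2 ≤ H
          · right; by_contra hc; exact c2 ⟨h, hc⟩
          · left; omega
        have hM : ∀ p q : ℕ, ((p, q) ∈ altSegs n' x ∧ p ≤ i ∧ i - 1 ≤ q) ↔
            (p, q) ∈ ({(i - T, i - 1), (i - 1, i + H - 1)} : Finset (ℕ × ℕ)) := by
          intro p q
          rw [classU2 h1 h2 hne c1.1 c1.2 hb2 p q]
          simp only [Finset.mem_insert, Finset.mem_singleton]
          exact Iff.rfl
        have hd1 : ((i - T, i - 1) : ℕ × ℕ)
            ∉ ({(i - 1, i + H - 1)} : Finset (ℕ × ℕ)) := by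
          simp only [Finset.mem_singleton]
          intro hc; rw [Prod.mk.injEq] at hc; omega
        have hsum : ∀ f : ℕ × ℕ → ℕ, (∀ p q, f (p + i, q + i) = f (p, q)) →
            ∑ s ∈ altSegs n' x, f s + f (i - T, i - 1) + f (i, i + H - 1)
              = ∑ s ∈ altSegs i x, f s + ∑ s ∈ altSegs (n' - i) (fun k => x (k + i)), f s
                  + (f (i - T, i - 1) + f (i - 1, i + H - 1)) := by
          intro f hf
          rw [sum_split h1 h2 f hf _ hM, Finset.sum_insert hd1, Finset.sum_singleton]
        have ha := hsum (fun _ => 1) (fun _ _ => rfl)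
        have hs := hsum (fun s => s.2 - s.1 + 1) hflen
        have hq := hsum (fun s => (s.2 - s.1 + 1) ^ 2) hfsq
        simp only [← Finset.card_eq_sum_ones] at ha
        simp only [] at hs hq
        have e2 : (aCount n' x : ℝ) = (aCount i x : ℝ)
            + (aCount (n' - i) (fun k => x (k + i)) : ℝ) + 0 := by
          have h' : ((aCount n' x : ℕ) : ℝ) + 1 + 1
              = ((aCount i x : ℕ) : ℝ) + ((aCount (n' - i) (fun k => x (k + i)) : ℕ) : ℝ)
                + (1 + 1) := by
            exact_mod_cast (show aCount n' x + 1 + 1 = aCount i x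
              + aCount (n' - i) (fun k => x (k + i)) + (1 + 1) by
                simp only [aCount]; exact ha)
          linarith
        have e3 : (sumLen n' x : ℝ) = (sumLen i x : ℝ)
            + (sumLen (n' - i) (fun k => x (k + i)) : ℝ) + 1 := by
          have h' : sumLen n' x + (i - 1 - (i - T) + 1) + (i + H - 1 - i + 1)
              = sumLen i x + sumLen (n' - i) (fun k => x (k + i))
                + (i - 1 - (i - T) + 1 + (i + H - 1 - (i - 1) + 1)) := by
            simp only [sumLen]; exact hs
          rw [show i - 1 - (i - T) + 1 = T by omega, show i + H - 1 - i + 1 = H by omega,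
            show i + H - 1 - (i - 1) + 1 = H + 1 by omega] at h'
          have h'' : ((sumLen n' x : ℕ) : ℝ) + T + H
              = ((sumLen i x : ℕ) : ℝ) + ((sumLen (n' - i) (fun k => x (k + i)) : ℕ) : ℝ)
                + ((T : ℝ) + ((H : ℝ) + 1)) := by exact_mod_cast h'
          linarith
        have e4 : (sumLenSq n' x : ℝ) = (sumLenSq i x : ℝ)
            + (sumLenSq (n' - i) (fun k => x (k + i)) : ℝ)
            + (((H : ℝ) + 1) ^ 2 - (H : ℝ) ^ 2) := by
          have h' : sumLenSq n' x + (i - 1 - (i - T) + 1) ^ 2 + (i + H - 1 - i + 1) ^ 2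
              = sumLenSq i x + sumLenSq (n' - i) (fun k => x (k + i))
                + ((i - 1 - (i - T) + 1) ^ 2 + (i + H - 1 - (i - 1) + 1) ^ 2) := by
            simp only [sumLenSq]; exact hq
          rw [show i - 1 - (i - T) + 1 = T by omega, show i + H - 1 - i + 1 = H by omega,
            show i + H - 1 - (i - 1) + 1 = H + 1 by omega] at h'
          have h'' : ((sumLenSq n' x : ℕ) : ℝ) + (T : ℝ) ^ 2 + (H : ℝ) ^ 2
              = ((sumLenSq i x : ℕ) : ℝ)
                + ((sumLenSq (n' - i) (fun k => x (k + i)) : ℕ) : ℝ)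
                + ((T : ℝ) ^ 2 + ((H : ℝ) + 1) ^ 2) := by exact_mod_cast h'
          linarith
        have key := fM_eq n x 0 0 1 (((H : ℝ) + 1) ^ 2 - (H : ℝ) ^ 2) e1 e2 e3 e4
        have key2 : fM m n n' x = fM m n i x + fM m n (n' - i) (fun k => x (k + i))
            + (1 - (H : ℝ)) := by
          rw [key]; ring
        have hTH : (H : ℝ) ≤ (T : ℝ) * (H : ℝ) := by
          have := mul_le_mul_of_nonneg_right hTr (show (0 : ℝ) ≤ (H : ℝ) by positivity)
          linarith [this]
        constructor
        · linarith [key2, hHr]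
        · rw [ge_iff_le]; linarith [key2, hTH]
    · have hb1 : T ≤ 1 ∨ x (i - 2) = x i := by
        by_cases h : 2 ≤ T
        · right; by_contra hc; exact c1 ⟨h, hc⟩
        · left; omega
      by_cases c2 : 2 ≤ H ∧ x (i - 1) ≠ x (i + 1)
      · -- case U3
        have hHr2 : (2 : ℝ) ≤ (H : ℝ) := by exact_mod_cast c2.1
        have hM : ∀ p q : ℕ, ((p, q) ∈ altSegs n' x ∧ p ≤ i ∧ i - 1 ≤ q) ↔
            (p, q) ∈ ({(i - T, i), (i, i + H - 1)} : Finset (ℕ × ℕ)) := by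
          intro p q
          rw [classU3 h1 h2 hne hb1 c2.1 c2.2 p q]
          simp only [Finset.mem_insert, Finset.mem_singleton]
          exact Iff.rfl
        have hd1 : ((i - T, i) : ℕ × ℕ) ∉ ({(i, i + H - 1)} : Finset (ℕ × ℕ)) := by
          simp only [Finset.mem_singleton]
          intro hc; rw [Prod.mk.injEq] at hc; omega
        have hsum : ∀ f : ℕ × ℕ → ℕ, (∀ p q, f (p + i, q + i) = f (p, q)) →
            ∑ s ∈ altSegs n' x, f s + f (i - T, i - 1) + f (i, i + H - 1)
              = ∑ s ∈ altSegs i x, f s + ∑ s ∈ altSegs (n' - i) (fun k => x (k + i)), f s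
                  + (f (i - T, i) + f (i, i + H - 1)) := by
          intro f hf
          rw [sum_split h1 h2 f hf _ hM, Finset.sum_insert hd1, Finset.sum_singleton]
        have ha := hsum (fun _ => 1) (fun _ _ => rfl)
        have hs := hsum (fun s => s.2 - s.1 + 1) hflen
        have hq := hsum (fun s => (s.2 - s.1 + 1) ^ 2) hfsq
        simp only [← Finset.card_eq_sum_ones] at ha
        simp only [] at hs hq
        have e2 : (aCount n' x : ℝ) = (aCount i x : ℝ)
            + (aCount (n' - i) (fun k => x (k + i)) : ℝ) + 0 := by
          have h' : ((aCount n' x : ℕ) : ℝ) + 1 + 1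
              = ((aCount i x : ℕ) : ℝ) + ((aCount (n' - i) (fun k => x (k + i)) : ℕ) : ℝ)
                + (1 + 1) := by
            exact_mod_cast (show aCount n' x + 1 + 1 = aCount i x
              + aCount (n' - i) (fun k => x (k + i)) + (1 + 1) by
                simp only [aCount]; exact ha)
          linarith
        have e3 : (sumLen n' x : ℝ) = (sumLen i x : ℝ)
            + (sumLen (n' - i) (fun k => x (k + i)) : ℝ) + 1 := by
          have h' : sumLen n' x + (i - 1 - (i - T) + 1) + (i + H - 1 - i + 1)
              = sumLen i x + sumLen (n' - i) (fun k => x (k + i))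
                + (i - (i - T) + 1 + (i + H - 1 - i + 1)) := by
            simp only [sumLen]; exact hs
          rw [show i - 1 - (i - T) + 1 = T by omega, show i + H - 1 - i + 1 = H by omega,
            show i - (i - T) + 1 = T + 1 by omega] at h'
          have h'' : ((sumLen n' x : ℕ) : ℝ) + T + H
              = ((sumLen i x : ℕ) : ℝ) + ((sumLen (n' - i) (fun k => x (k + i)) : ℕ) : ℝ)
                + (((T : ℝ) + 1) + (H : ℝ)) := by exact_mod_cast h'
          linarith
        have e4 : (sumLenSq n' x : ℝ) = (sumLenSq i x : ℝ)
            + (sumLenSq (n' - i) (fun k => x (k + i)) : ℝ)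
            + (((T : ℝ) + 1) ^ 2 - (T : ℝ) ^ 2) := by
          have h' : sumLenSq n' x + (i - 1 - (i - T) + 1) ^ 2 + (i + H - 1 - i + 1) ^ 2
              = sumLenSq i x + sumLenSq (n' - i) (fun k => x (k + i))
                + ((i - (i - T) + 1) ^ 2 + (i + H - 1 - i + 1) ^ 2) := by
            simp only [sumLenSq]; exact hq
          rw [show i - 1 - (i - T) + 1 = T by omega, show i + H - 1 - i + 1 = H by omega,
            show i - (i - T) + 1 = T + 1 by omega] at h'
          have h'' : ((sumLenSq n' x : ℕ) : ℝ) + (T : ℝ) ^ 2 + (H : ℝ) ^ 2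
              = ((sumLenSq i x : ℕ) : ℝ)
                + ((sumLenSq (n' - i) (fun k => x (k + i)) : ℕ) : ℝ)
                + (((T : ℝ) + 1) ^ 2 + (H : ℝ) ^ 2) := by exact_mod_cast h'
          linarith
        have key := fM_eq n x 0 0 1 (((T : ℝ) + 1) ^ 2 - (T : ℝ) ^ 2) e1 e2 e3 e4
        have key2 : fM m n n' x = fM m n i x + fM m n (n' - i) (fun k => x (k + i))
            + (1 - (T : ℝ)) := by
          rw [key]; ring
        have hTH : (T : ℝ) ≤ (T : ℝ) * (H : ℝ) := by
          have := mul_le_mul_of_nonneg_left hHr (show (0 : ℝ) ≤ (T : ℝ) by positivity)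
          linarith [this]
        constructor
        · linarith [key2, hTr]
        · rw [ge_iff_le]; linarith [key2, hTH]
      · -- case U1
        have hb2 : H ≤ 1 ∨ x (i - 1) = x (i + 1) := by
          by_cases h : 2 ≤ H
          · right; by_contra hc; exact c2 ⟨h, hc⟩
          · left; omega
        have hM : ∀ p q : ℕ, ((p, q) ∈ altSegs n' x ∧ p ≤ i ∧ i - 1 ≤ q) ↔
            (p, q) ∈ ({(i - T, i + H - 1)} : Finset (ℕ × ℕ)) := by
          intro p q
          rw [classU1 h1 h2 hne hb1 hb2 p q]
          simp only [Finset.mem_singleton]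
          exact Iff.rfl
        have hsum : ∀ f : ℕ × ℕ → ℕ, (∀ p q, f (p + i, q + i) = f (p, q)) →
            ∑ s ∈ altSegs n' x, f s + f (i - T, i - 1) + f (i, i + H - 1)
              = ∑ s ∈ altSegs i x, f s + ∑ s ∈ altSegs (n' - i) (fun k => x (k + i)), f s
                  + f (i - T, i + H - 1) := by
          intro f hf
          rw [sum_split h1 h2 f hf _ hM, Finset.sum_singleton]
        have ha := hsum (fun _ => 1) (fun _ _ => rfl)
        have hs := hsum (fun s => s.2 - s.1 + 1) hflen
        have hq := hsum (fun s => (s.2 - s.1 + 1) ^ 2) hfsq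
        simp only [← Finset.card_eq_sum_ones] at ha
        simp only [] at hs hq
        have e2 : (aCount n' x : ℝ) = (aCount i x : ℝ)
            + (aCount (n' - i) (fun k => x (k + i)) : ℝ) + (-1) := by
          have h' : ((aCount n' x : ℕ) : ℝ) + 1 + 1
              = ((aCount i x : ℕ) : ℝ) + ((aCount (n' - i) (fun k => x (k + i)) : ℕ) : ℝ)
                + 1 := by
            exact_mod_cast (show aCount n' x + 1 + 1 = aCount i x
              + aCount (n' - i) (fun k => x (k + i)) + 1 by
                simp only [aCount]; exact ha)
          linarith
        have e3 : (sumLen n' x : ℝ) = (sumLen i x : ℝ)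
            + (sumLen (n' - i) (fun k => x (k + i)) : ℝ) + 0 := by
          have h' : sumLen n' x + (i - 1 - (i - T) + 1) + (i + H - 1 - i + 1)
              = sumLen i x + sumLen (n' - i) (fun k => x (k + i))
                + (i + H - 1 - (i - T) + 1) := by
            simp only [sumLen]; exact hs
          rw [show i - 1 - (i - T) + 1 = T by omega, show i + H - 1 - i + 1 = H by omega,
            show i + H - 1 - (i - T) + 1 = T + H by omega] at h'
          have h'' : ((sumLen n' x : ℕ) : ℝ) + T + H
              = ((sumLen i x : ℕ) : ℝ) + ((sumLen (n' - i) (fun k => x (k + i)) : ℕ) : ℝ)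
                + ((T : ℝ) + (H : ℝ)) := by exact_mod_cast h'
          linarith
        have e4 : (sumLenSq n' x : ℝ) = (sumLenSq i x : ℝ)
            + (sumLenSq (n' - i) (fun k => x (k + i)) : ℝ)
            + (((T : ℝ) + (H : ℝ)) ^ 2 - (T : ℝ) ^ 2 - (H : ℝ) ^ 2) := by
          have h' : sumLenSq n' x + (i - 1 - (i - T) + 1) ^ 2 + (i + H - 1 - i + 1) ^ 2
              = sumLenSq i x + sumLenSq (n' - i) (fun k => x (k + i))
                + (i + H - 1 - (i - T) + 1) ^ 2 := by
            simp only [sumLenSq]; exact hq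
          rw [show i - 1 - (i - T) + 1 = T by omega, show i + H - 1 - i + 1 = H by omega,
            show i + H - 1 - (i - T) + 1 = T + H by omega] at h'
          have h'' : ((sumLenSq n' x : ℕ) : ℝ) + (T : ℝ) ^ 2 + (H : ℝ) ^ 2
              = ((sumLenSq i x : ℕ) : ℝ)
                + ((sumLenSq (n' - i) (fun k => x (k + i)) : ℕ) : ℝ)
                + ((T : ℝ) + (H : ℝ)) ^ 2 := by exact_mod_cast h'
          linarith
        have key := fM_eq n x 0 (-1) 0
          (((T : ℝ) + (H : ℝ)) ^ 2 - (T : ℝ) ^ 2 - (H : ℝ) ^ 2) e1 e2 e3 e4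
        have key2 : fM m n n' x = fM m n i x + fM m n (n' - i) (fun k => x (k + i))
            + (1 - (T : ℝ) * (H : ℝ)) := by
          rw [key]; ring
        have hTH : (1 : ℝ) ≤ (T : ℝ) * (H : ℝ) := by
          have := mul_le_mul hTr hHr (by norm_num) (by positivity)
          linarith
        constructor
        · linarith [key2, hTH]
        · rw [ge_iff_le]; linarith [key2]

end Final

/-- Splitting bounds for `f_{m,n}`: for `y ∈ Z_m^{n'}` with `n > 1`, `m > 2`, `n' > 2`, and
`1 ≤ i ≤ n'-1`: if `y_i = y_{i+1}` then
`f_{m,n}(y) = f_{m,n}(y_{[1,i]}) + f_{m,n}(y_{[i+1,n']}) - mn + n + 1`; if `y_i ≠ y_{i+1}`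
then `f_{m,n}(y) ≤ f_{m,n}(y_{[1,i]}) + f_{m,n}(y_{[i+1,n']})` and
`f_{m,n}(y) ≥ f_{m,n}(y_{[1,i]}) + f_{m,n}(y_{[i+1,n']}) + 1 - t(y_{[1,i]})·h(y_{[i+1,n']})`. -/
theorem stmt14 (n m n' : ℕ) (hn : 1 < n) (hm : 2 < m) (hn' : 2 < n') (y : Fin n' → Fin m)
    (i : ℕ) (hi : 1 ≤ i) (hi' : i ≤ n' - 1) :
    (extWord n' (by omega) y (i - 1) = extWord n' (by omega) y i →
      fM m n n' (extWord n' (by omega) y)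
        = fM m n i (extWord n' (by omega) y)
            + fM m n (n' - i) (fun k => extWord n' (by omega) y (k + i))
            - (m : ℝ) * n + n + 1)
    ∧ (extWord n' (by omega) y (i - 1) ≠ extWord n' (by omega) y i →
      (fM m n n' (extWord n' (by omega) y)
          ≤ fM m n i (extWord n' (by omega) y)
              + fM m n (n' - i) (fun k => extWord n' (by omega) y (k + i)))
      ∧ fM m n n' (extWord n' (by omega) y)
          ≥ fM m n i (extWord n' (by omega) y)
              + fM m n (n' - i) (fun k => extWord n' (by omega) y (k + i)) + 1
              - (tailAlt i (extWord n' (by omega) y) : ℝ)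
                  * (headAlt (n' - i) (fun k => extWord n' (by omega) y (k + i)) : ℝ)) := by
  exact main_split (extWord n' (by omega) y) n n' i hi (by omega)
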